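/- (i) For every 1 ≤ i ≤ n and b ∈ P, one has the cross-relation s_i ∘ 𝒟_b − 𝒟_{s_i(b)} ∘ s_i = −k_{α_i}·(b, α_i)·id as operators on ℂ_k[P]. (ii) Let θ be the highest short root (so (θ,θ) = 2 under the normalization that short roots have squared length 2) and define the operator s_0^x on ℂ_k[P] by s_0^x(f) = X_θ · s_θ(f). Then s_0^x ∘ 𝒟_b − (𝒟_{s_θ(b)} + (b,θ)·id) ∘ s_0^x = k_θ·(b, θ)·id as operators on ℂ_k[P]. -/

import Mathlib

noncomputable section

open scoped RealInnerProductSpace BigOperators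

/-- Euclidean space `ℝ^n`, the ambient space of the root system. -/
abbrev Vn (n : ℕ) := EuclideanSpace ℝ (Fin n)

/-- The coroot `α^∨ = 2α/(α,α)` of a vector `α`. -/
def coroot {n : ℕ} (α : Vn n) : Vn n := (2 / ⟪α, α⟫) • α

/-- The reflection `s_α` applied to `β`: `β − (β, α^∨)·α`. -/
def reflVec {n : ℕ} (α β : Vn n) : Vn n := β - (2 * ⟪β, α⟫ / ⟪α, α⟫) • α

/-- An irreducible reduced crystallographic root system of rank `n` in `ℝ^n`, together
with a fixed base of simple roots `α_1,…,α_n`, the corresponding set of positive roots,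
the fundamental weights `ω_1,…,ω_n` and the highest short root `θ`. -/
structure RootSystemData (n : ℕ) where
  /-- the set of roots -/
  R : Finset (Vn n)
  /-- the set of positive roots -/
  Rplus : Finset (Vn n)
  /-- the simple roots `α_1,…,α_n` -/
  sroot : Fin n → Vn n
  /-- the fundamental weights `ω_1,…,ω_n` -/
  fw : Fin n → Vn n
  /-- the highest short root `θ` -/
  hst : Vn n
  root_ne_zero : ∀ α ∈ R, α ≠ (0 : Vn n)
  span_top : Submodule.span ℝ (R : Set (Vn n)) = ⊤
  reflect_mem : ∀ α ∈ R, ∀ β ∈ R, reflVec α β ∈ R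
  crystallographic : ∀ α ∈ R, ∀ β ∈ R, ∃ z : ℤ, 2 * ⟪β, α⟫ / ⟪α, α⟫ = (z : ℝ)
  reduced : ∀ α ∈ R, ∀ c : ℝ, c • α ∈ R → c = 1 ∨ c = -1
  irreducible : ∀ S : Set (Vn n), (∃ α ∈ R, α ∈ S) →
    (∀ α ∈ R, ∀ β ∈ R, α ∈ S → ⟪α, β⟫ ≠ 0 → β ∈ S) → ∀ β ∈ R, β ∈ S
  sroot_mem : ∀ i, sroot i ∈ Rplus
  pos_sub : Rplus ⊆ R
  pos_or : ∀ α ∈ R, α ∈ Rplus ∨ -α ∈ Rplus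
  pos_not_and : ∀ α ∈ Rplus, -α ∉ Rplus
  pos_decomp : ∀ α ∈ Rplus, ∃ c : Fin n → ℕ, α = ∑ i, (c i : ℝ) • sroot i
  fw_pair : ∀ i j, ⟪fw i, coroot (sroot j)⟫ = if i = j then 1 else 0
  theta_mem : hst ∈ Rplus
  theta_short : ∀ α ∈ R, ⟪hst, hst⟫ ≤ ⟪α, α⟫
  theta_highest : ∀ α ∈ R, ∃ c : Fin n → ℝ, (∀ i, 0 ≤ c i) ∧
    coroot hst - coroot α = ∑ i, c i • coroot (sroot i)

namespace RootSystemData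

variable {n : ℕ} (D : RootSystemData n)

/-- The weight lattice `P = ⊕_i ℤ·ω_i`. -/
def P : Submodule ℤ (Vn n) := Submodule.span ℤ (Set.range D.fw)

/-- `ρ = ω_1 + ⋯ + ω_n` (the half-sum of the positive roots). -/
def rho : Vn n := ∑ i, D.fw i

/-- The Coxeter number `h = 1 + (ρ, θ^∨)`. -/
def h : ℝ := 1 + ⟪D.rho, coroot D.hst⟫

/-- The Weyl group `W`, as the subgroup of `GL(ℝ^n)` generated by the reflections
`s_α`, `α ∈ R`. -/
def Weyl : Subgroup ((Vn n) ≃ₗ[ℝ] (Vn n)) :=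
  Subgroup.closure { w | ∃ α ∈ D.R, ∀ v, w v = reflVec α v }

/-- `ω_r` is a minuscule (fundamental) weight: `(ω_r, α^∨) ≤ 1` for all `α ∈ R_+`. -/
def Minuscule (r : Fin n) : Prop := ∀ α ∈ D.Rplus, ⟪D.fw r, coroot α⟫ ≤ 1

end RootSystemData

/-- The group algebra `ℂ[P]` of the weight lattice. -/
abbrev GA {n : ℕ} (D : RootSystemData n) := AddMonoidAlgebra ℂ ↥D.P

-- The basis element `X_v` of `ℂ[P]` (and `0` if `v ∉ P`; under the hypotheses below
-- only genuine lattice elements occur).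
open Classical in
def XP {n : ℕ} (D : RootSystemData n) (v : Vn n) : GA D :=
  if h : v ∈ D.P then AddMonoidAlgebra.single (⟨v, h⟩ : ↥D.P) 1 else 0

/-- The derivation `∂_b` of `ℂ[P]`: `∂_b(X_c) = (b,c)·X_c`. -/
def der {n : ℕ} (D : RootSystemData n) (b : Vn n) (f : GA D) : GA D :=
  Finsupp.sum f.coeff fun c v => ((⟪b, (c : Vn n)⟫ : ℝ) : ℂ) • AddMonoidAlgebra.single c v

/-- The action of a lattice map `s : P → P` on `ℂ[P]`: `X_b ↦ X_{s(b)}`. -/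
def sOp {n : ℕ} (D : RootSystemData n) (s : ↥D.P → ↥D.P) (f : GA D) : GA D :=
  AddMonoidAlgebra.ofCoeff (Finsupp.mapDomain s f.coeff)

/-- `IsTrigDunkl D k sP b Dop` says that `Dop` is the trigonometric Dunkl operator
`𝒟_b f = ∂_b f + Σ_{α ∈ R_+} k_α (b,α)·(1 − X_α^{−1})^{−1}(f − s_α f) − (ρ_k, b)·f`,
where `(1 − X_α^{−1})^{−1}(f − s_α f)` is encoded by its defining equation and
`(ρ_k, b) = (1/2)Σ_{α ∈ R_+} k_α (α, b)`. -/
def IsTrigDunkl {n : ℕ} (D : RootSystemData n) (k : Vn n → ℂ)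
    (sP : Vn n → ↥D.P → ↥D.P) (b : Vn n) (Dop : GA D → GA D) : Prop :=
  ∀ f : GA D, ∃ g : Vn n → GA D,
    (∀ α ∈ D.Rplus, (1 - XP D (-α)) * g α = f - sOp D (sP α) f) ∧
    Dop f = der D b f + (∑ α ∈ D.Rplus, (k α * ((⟪b, α⟫ : ℝ) : ℂ)) • g α)
      - (((1 / 2 : ℂ) * ∑ α ∈ D.Rplus, k α * ((⟪α, b⟫ : ℝ) : ℂ)) • f)

namespace DH

variable {n : ℕ}

lemma inner_self_ne {α : Vn n} (h : α ≠ 0) : ⟪α, α⟫ ≠ 0 := by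
  intro hh
  exact h ((inner_self_eq_zero (𝕜 := ℝ)).mp hh)

lemma inner_self_pos {α : Vn n} (h : α ≠ 0) : 0 < ⟪α, α⟫ :=
  lt_of_le_of_ne real_inner_self_nonneg (Ne.symm (inner_self_ne h))

lemma reflVec_def (α v : Vn n) : reflVec α v = v - (2 * ⟪v, α⟫ / ⟪α, α⟫) • α := rfl

lemma reflVec_add (α u v : Vn n) : reflVec α (u + v) = reflVec α u + reflVec α v := by
  simp only [reflVec, inner_add_left]
  rw [show (2 * (⟪u,α⟫ + ⟪v,α⟫) / ⟪α,α⟫) = 2*⟪u,α⟫/⟪α,α⟫ + 2*⟪v,α⟫/⟪α,α⟫ by ring]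
  rw [add_smul]; abel

lemma reflVec_smul (α : Vn n) (c : ℝ) (v : Vn n) : reflVec α (c • v) = c • reflVec α v := by
  simp only [reflVec, real_inner_smul_left, smul_sub, smul_smul]
  rw [show 2 * (c * ⟪v,α⟫) / ⟪α,α⟫ = c * (2*⟪v,α⟫/⟪α,α⟫) by ring]

lemma reflVec_sub (α u v : Vn n) : reflVec α (u - v) = reflVec α u - reflVec α v := by
  have := reflVec_add α (u - v) v; rw [sub_add_cancel] at this
  rw [this]; abel

lemma reflVec_neg (α v : Vn n) : reflVec α (-v) = - reflVec α v := by
  have := reflVec_smul α (-1) v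
  simpa using this

lemma reflVec_zero (α : Vn n) : reflVec α 0 = 0 := by
  simp [reflVec]

lemma reflVec_isometry {α : Vn n} (h : α ≠ 0) (u v : Vn n) :
    ⟪reflVec α u, reflVec α v⟫ = ⟪u, v⟫ := by
  have hA := inner_self_ne h
  simp only [reflVec, inner_sub_left, inner_sub_right, real_inner_smul_left,
    real_inner_smul_right]
  rw [real_inner_comm α v]
  revert hA
  generalize ⟪u,v⟫ = P
  generalize ⟪u,α⟫ = Q
  generalize ⟪v,α⟫ = R
  generalize ⟪α,α⟫ = S
  intro hA
  field_simp
  ring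

lemma reflVec_adjoint (α u v : Vn n) : ⟪reflVec α u, v⟫ = ⟪u, reflVec α v⟫ := by
  simp only [reflVec, inner_sub_left, inner_sub_right, real_inner_smul_left,
    real_inner_smul_right]
  rw [real_inner_comm α v]
  ring

lemma reflVec_invol {α : Vn n} (h : α ≠ 0) (v : Vn n) : reflVec α (reflVec α v) = v := by
  have hA := inner_self_ne h
  rw [reflVec_def α (reflVec α v), reflVec_def α v, inner_sub_left, real_inner_smul_left]
  have : 2 * (⟪v, α⟫ - 2 * ⟪v, α⟫ / ⟪α, α⟫ * ⟪α, α⟫) / ⟪α, α⟫ = - (2 * ⟪v,α⟫/⟪α,α⟫) := by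
    rw [div_mul_cancel₀ _ hA]; ring
  rw [this, neg_smul]; abel

lemma reflVec_self {α : Vn n} (h : α ≠ 0) : reflVec α α = -α := by
  have hA := inner_self_ne h
  rw [reflVec_def, mul_div_assoc, div_self hA, mul_one, two_smul]; abel

lemma reflVec_neg_root (α v : Vn n) : reflVec (-α) v = reflVec α v := by
  simp only [reflVec, inner_neg_right, inner_neg_left, neg_neg, smul_neg, mul_neg, neg_div,
    neg_smul]

lemma reflVec_conj {α : Vn n} (h : α ≠ 0) (u v : Vn n) :
    reflVec (reflVec α u) v = reflVec α (reflVec u (reflVec α v)) := by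
  have h1 : reflVec α (reflVec u (reflVec α v))
      = reflVec α (reflVec α v) - (2 * ⟪reflVec α v, u⟫ / ⟪u,u⟫) • reflVec α u := by
    rw [reflVec_def u (reflVec α v), reflVec_sub, reflVec_smul]
  rw [h1, reflVec_invol h, reflVec_def (reflVec α u) v, reflVec_isometry h u u,
    reflVec_adjoint α v u, ← reflVec_adjoint]

lemma reflVec_comm {α γ : Vn n} (hα : α ≠ 0) (hperp : reflVec α γ = γ) (v : Vn n) :
    reflVec α (reflVec γ v) = reflVec γ (reflVec α v) := by
  have := reflVec_conj hα γ (reflVec α v)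
  rw [hperp, reflVec_invol hα] at this
  exact this.symm

end DH
namespace DH

open AddMonoidAlgebra

variable {n : ℕ} (D : RootSystemData n)

instance uniqueSumsP (P : Submodule ℤ (Vn n)) : UniqueSums ↥P :=
  UniqueSums.of_injective_addHom P.subtype.toAddMonoidHom.toAddHom (fun a b h => Subtype.ext h) inferInstance

example : NoZeroDivisors (GA D) := inferInstance

lemma XP_mem {v : Vn n} (hv : v ∈ D.P) :
    XP D v = AddMonoidAlgebra.single (⟨v, hv⟩ : ↥D.P) 1 := by
  rw [XP, dif_pos hv]

lemma XP_zero : XP D 0 = 1 := by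
  rw [XP_mem D (Submodule.zero_mem _), AddMonoidAlgebra.one_def]
  rfl

lemma XP_mul {u v : Vn n} (hu : u ∈ D.P) (hv : v ∈ D.P) :
    XP D u * XP D v = XP D (u + v) := by
  rw [XP_mem D hu, XP_mem D hv, XP_mem D (Submodule.add_mem _ hu hv),
    AddMonoidAlgebra.single_mul_single, one_mul]
  rfl

lemma one_sub_XP_ne {v : Vn n} (hv : v ∈ D.P) (h0 : v ≠ 0) : (1 : GA D) - XP D v ≠ 0 := by
  rw [sub_ne_zero, XP_mem D hv, AddMonoidAlgebra.one_def]
  intro H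
  rcases AddMonoidAlgebra.single_inj.mp H with ⟨h1, _⟩ | ⟨h1, _⟩
  · exact h0 (congrArg Subtype.val h1).symm
  · exact one_ne_zero h1

lemma cancel {v : Vn n} (hv : v ∈ D.P) (h0 : v ≠ 0) {g h : GA D}
    (H : (1 - XP D v) * g = (1 - XP D v) * h) : g = h :=
  mul_left_cancel₀ (one_sub_XP_ne D hv h0) H

/-! ### der -/

def derL (b : Vn n) : GA D →ₗ[ℂ] GA D :=
  (Finsupp.lsum ℂ (fun c : ↥D.P => ((⟪b, (c : Vn n)⟫ : ℝ) : ℂ) •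
    (AddMonoidAlgebra.lsingle c : ℂ →ₗ[ℂ] GA D))).comp
    (AddMonoidAlgebra.coeffLinearEquiv ℂ).toLinearMap

lemma der_eq (b : Vn n) (f : GA D) : der D b f = derL D b f := rfl

lemma der_single (b : Vn n) (c : ↥D.P) (r : ℂ) :
    der D b (AddMonoidAlgebra.single c r)
      = ((⟪b, (c : Vn n)⟫ : ℝ) : ℂ) • AddMonoidAlgebra.single c r := by
  rw [der, AddMonoidAlgebra.coeff_single, Finsupp.sum_single_index]
  rw [AddMonoidAlgebra.single_zero, smul_zero]

lemma der_zero (b : Vn n) : der D b 0 = 0 := by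
  rw [der, AddMonoidAlgebra.coeff_zero, Finsupp.sum_zero_index]

lemma der_add (b : Vn n) (f g : GA D) : der D b (f + g) = der D b f + der D b g := by
  rw [der_eq, der_eq, der_eq, map_add]

lemma der_sub (b : Vn n) (f g : GA D) : der D b (f - g) = der D b f - der D b g := by
  rw [der_eq, der_eq, der_eq, map_sub]

lemma der_smul (b : Vn n) (z : ℂ) (f : GA D) : der D b (z • f) = z • der D b f := by
  rw [der_eq, der_eq, map_smul]

/-! ### sOp -/

lemma sOp_add (s : ↥D.P → ↥D.P) (f g : GA D) : sOp D s (f + g) = sOp D s f + sOp D s g :=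
  AddMonoidAlgebra.mapDomain_add s f g

lemma sOp_smul (s : ↥D.P → ↥D.P) (z : ℂ) (f : GA D) : sOp D s (z • f) = z • sOp D s f :=
  congrArg AddMonoidAlgebra.ofCoeff (Finsupp.mapDomain_smul z f.coeff)

lemma sOp_sub (s : ↥D.P → ↥D.P) (f g : GA D) : sOp D s (f - g) = sOp D s f - sOp D s g := by
  have h := sOp_add D s (f - g) g
  rw [sub_add_cancel] at h
  rw [h]; abel

lemma sOp_single (s : ↥D.P → ↥D.P) (c : ↥D.P) (r : ℂ) :
    sOp D s (AddMonoidAlgebra.single c r) = AddMonoidAlgebra.single (s c) r :=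
  AddMonoidAlgebra.mapDomain_single

lemma sOp_sum {ι : Type*} (s : ↥D.P → ↥D.P) (t : Finset ι) (F : ι → GA D) :
    sOp D s (∑ x ∈ t, F x) = ∑ x ∈ t, sOp D s (F x) :=
  map_sum (AddMonoidHom.mk' (sOp D s) (sOp_add D s)) F t

end DH
namespace DH

variable {n : ℕ} {D : RootSystemData n}

lemma der_XP_mul (b : Vn n) {v : Vn n} (hv : v ∈ D.P) (f : GA D) :
    der D b (XP D v * f)
      = ((⟪b, v⟫ : ℝ) : ℂ) • (XP D v * f) + XP D v * der D b f := by
  induction f using AddMonoidAlgebra.induction_linear with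
  | zero => rw [mul_zero, der_zero, mul_zero, smul_zero, add_zero]
  | add f g hf hg =>
      rw [mul_add, der_add, hf, hg, der_add, mul_add, smul_add]; abel
  | single c r =>
      rw [XP_mem D hv, AddMonoidAlgebra.single_mul_single, one_mul, der_single, der_single,
        mul_smul_comm, AddMonoidAlgebra.single_mul_single, one_mul, ← add_smul]
      congr 1
      have hco : ((⟨v, hv⟩ + c : ↥D.P) : Vn n) = v + (c : Vn n) := rfl
      rw [hco, inner_add_right]
      push_cast
      ring

section Reflection

variable {α : Vn n} {s : ↥D.P → ↥D.P}

lemma s_add (hs : ∀ p : ↥D.P, ((s p : Vn n)) = reflVec α (p : Vn n)) (p q : ↥D.P) :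
    s (p + q) = s p + s q := by
  apply Subtype.ext
  rw [Submodule.coe_add, hs, hs, hs, Submodule.coe_add, reflVec_add]

lemma s_zero (hs : ∀ p : ↥D.P, ((s p : Vn n)) = reflVec α (p : Vn n)) : s 0 = 0 := by
  apply Subtype.ext
  rw [hs, Submodule.coe_zero, reflVec_zero]

lemma refl_mem_P (hs : ∀ p : ↥D.P, ((s p : Vn n)) = reflVec α (p : Vn n))
    {v : Vn n} (hv : v ∈ D.P) : reflVec α v ∈ D.P := by
  have := (s ⟨v, hv⟩).2
  rwa [hs ⟨v, hv⟩] at this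

lemma sOp_mul (hs : ∀ p : ↥D.P, ((s p : Vn n)) = reflVec α (p : Vn n)) (f g : GA D) :
    sOp D s (f * g) = sOp D s f * sOp D s g :=
  AddMonoidAlgebra.mapDomain_mul (R := ℂ) (AddMonoidHom.mk' s (s_add hs)) f g

lemma sOp_one (hs : ∀ p : ↥D.P, ((s p : Vn n)) = reflVec α (p : Vn n)) :
    sOp D s (1 : GA D) = 1 := by
  have h1 : (1 : GA D) = AddMonoidAlgebra.single (0 : ↥D.P) 1 := AddMonoidAlgebra.one_def
  rw [h1, sOp_single, s_zero hs]

lemma sOp_XP (hs : ∀ p : ↥D.P, ((s p : Vn n)) = reflVec α (p : Vn n))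
    {v : Vn n} (hv : v ∈ D.P) : sOp D s (XP D v) = XP D (reflVec α v) := by
  rw [XP_mem D hv, sOp_single, XP_mem D (refl_mem_P hs hv)]
  congr 1
  exact Subtype.ext (hs ⟨v, hv⟩)

lemma s_invol (hα : α ≠ 0) (hs : ∀ p : ↥D.P, ((s p : Vn n)) = reflVec α (p : Vn n))
    (p : ↥D.P) : s (s p) = p := by
  apply Subtype.ext
  rw [hs, hs, reflVec_invol hα]

lemma sOp_invol (hα : α ≠ 0) (hs : ∀ p : ↥D.P, ((s p : Vn n)) = reflVec α (p : Vn n))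
    (f : GA D) : sOp D s (sOp D s f) = f := by
  have h1 : sOp D s (sOp D s f) = AddMonoidAlgebra.ofCoeff (Finsupp.mapDomain (s ∘ s) f.coeff) :=
    congrArg AddMonoidAlgebra.ofCoeff (Finsupp.mapDomain_comp).symm
  have hss : s ∘ s = id := funext (s_invol hα hs)
  rw [h1, hss, Finsupp.mapDomain_id]

lemma sOp_der (hα : α ≠ 0) (hs : ∀ p : ↥D.P, ((s p : Vn n)) = reflVec α (p : Vn n))
    (b : Vn n) (f : GA D) :
    sOp D s (der D b f) = der D (reflVec α b) (sOp D s f) := by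
  induction f using AddMonoidAlgebra.induction_linear with
  | zero =>
      have h1 : sOp D s (0 : GA D) = 0 := AddMonoidAlgebra.mapDomain_zero _
      rw [der_zero, h1, der_zero]
  | add f g hf hg => rw [der_add, sOp_add, sOp_add, hf, hg, der_add]
  | single c r =>
      rw [der_single, sOp_smul, sOp_single, der_single, hs,
        reflVec_isometry hα]

end Reflection

lemma sOp_sOp (s t : ↥D.P → ↥D.P) (f : GA D) :
    sOp D s (sOp D t f) = sOp D (s ∘ t) f :=
  congrArg AddMonoidAlgebra.ofCoeff (Finsupp.mapDomain_comp).symm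

end DH
open scoped Classical

namespace DH

variable {n : ℕ} {D : RootSystemData n}

lemma sroot_R (i : Fin n) : D.sroot i ∈ D.R := D.pos_sub (D.sroot_mem i)

lemma sroot_ne (i : Fin n) : D.sroot i ≠ 0 := D.root_ne_zero _ (sroot_R i)

lemma theta_R : D.hst ∈ D.R := D.pos_sub D.theta_mem

lemma theta_ne : D.hst ≠ 0 := D.root_ne_zero _ theta_R

lemma neg_mem_R {β : Vn n} (h : β ∈ D.R) : -β ∈ D.R := by
  have h2 := D.reflect_mem β h β h
  rwa [reflVec_self (D.root_ne_zero β h)] at h2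

lemma inner_fw_sroot (i j : Fin n) :
    ⟪D.fw i, D.sroot j⟫ = if i = j then ⟪D.sroot j, D.sroot j⟫ / 2 else 0 := by
  have h := D.fw_pair i j
  rw [coroot, real_inner_smul_right] at h
  have hA := inner_self_ne (sroot_ne (D := D) j)
  split_ifs at h ⊢ with hij
  · rw [div_mul_eq_mul_div] at h
    have h2 := (div_eq_one_iff_eq hA).mp h
    linarith
  · rcases mul_eq_zero.mp h with h1 | h1
    · exact absurd h1 (div_ne_zero two_ne_zero hA)
    · exact h1

lemma pos_inner_fw_nonneg {β : Vn n} (hβ : β ∈ D.Rplus) (j : Fin n) : 0 ≤ ⟪D.fw j, β⟫ := by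
  obtain ⟨c, hc⟩ := D.pos_decomp β hβ
  rw [hc, inner_sum]
  apply Finset.sum_nonneg
  intro l _
  rw [real_inner_smul_right, inner_fw_sroot]
  split_ifs with hjl
  · subst hjl
    have := inner_self_pos (sroot_ne (D := D) j)
    positivity
  · rw [mul_zero]

lemma exists_pos_coeff {β : Vn n} (hβ : β ∈ D.Rplus) (i : Fin n) (hne : β ≠ D.sroot i) :
    ∃ j, j ≠ i ∧ 0 < ⟪D.fw j, β⟫ := by
  by_contra hcon
  push_neg at hcon
  obtain ⟨c, hc⟩ := D.pos_decomp β hβ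
  have hcoef : ∀ j, ⟪D.fw j, β⟫ = (c j : ℝ) * (⟪D.sroot j, D.sroot j⟫ / 2) := by
    intro j
    rw [hc, inner_sum]
    rw [Finset.sum_eq_single j]
    · rw [real_inner_smul_right, inner_fw_sroot, if_pos rfl]
    · intro l _ hl
      rw [real_inner_smul_right, inner_fw_sroot, if_neg (Ne.symm hl), mul_zero]
    · intro h; exact absurd (Finset.mem_univ j) h
  have hz : ∀ j, j ≠ i → c j = 0 := by
    intro j hj
    have h1 := hcon j hj
    have h2 := pos_inner_fw_nonneg hβ j
    have h3 : ⟪D.fw j, β⟫ = 0 := le_antisymm h1 h2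
    rw [hcoef j] at h3
    have h4 := inner_self_pos (sroot_ne (D := D) j)
    rcases mul_eq_zero.mp h3 with h5 | h5
    · exact_mod_cast h5
    · linarith
  have hβeq : β = (c i : ℝ) • D.sroot i := by
    rw [hc, Finset.sum_eq_single i]
    · intro l _ hl
      rw [hz l hl]
      norm_num
    · intro h; exact absurd (Finset.mem_univ i) h
  have hβR : β ∈ D.R := D.pos_sub hβ
  rw [hβeq] at hβR
  rcases D.reduced (D.sroot i) (sroot_R i) _ hβR with h1 | h1
  · rw [h1, one_smul] at hβeq
    exact hne hβeq
  · have : (0 : ℝ) ≤ (c i : ℝ) := Nat.cast_nonneg _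
    rw [h1] at this
    norm_num at this

lemma simple_perm (i : Fin n) {β : Vn n} (hβ : β ∈ D.Rplus) (hne : β ≠ D.sroot i) :
    reflVec (D.sroot i) β ∈ D.Rplus ∧ reflVec (D.sroot i) β ≠ D.sroot i := by
  have hβR : β ∈ D.R := D.pos_sub hβ
  have hγR : reflVec (D.sroot i) β ∈ D.R := D.reflect_mem _ (sroot_R i) _ hβR
  obtain ⟨j, hji, hjpos⟩ := exists_pos_coeff hβ i hne
  have hfwγ : ⟪D.fw j, reflVec (D.sroot i) β⟫ = ⟪D.fw j, β⟫ := by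
    rw [reflVec_def, inner_sub_right, real_inner_smul_right, inner_fw_sroot, if_neg hji,
      mul_zero, sub_zero]
  have hγp : reflVec (D.sroot i) β ∈ D.Rplus := by
    rcases D.pos_or _ hγR with h | h
    · exact h
    · have := pos_inner_fw_nonneg h j
      rw [inner_neg_right, hfwγ] at this
      linarith
  refine ⟨hγp, ?_⟩
  intro hcon
  have h2 : β = -D.sroot i := by
    have := congrArg (reflVec (D.sroot i)) hcon
    rwa [reflVec_invol (sroot_ne i), reflVec_self (sroot_ne i)] at this
  have h3 := D.pos_not_and β hβ
  rw [h2, neg_neg] at h3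
  exact h3 (D.sroot_mem i)

lemma sum_reindex_simple {M : Type*} [AddCommMonoid M] (i : Fin n) (F : Vn n → M) :
    ∑ β ∈ D.Rplus.erase (D.sroot i), F β
      = ∑ β ∈ D.Rplus.erase (D.sroot i), F (reflVec (D.sroot i) β) := by
  apply Finset.sum_nbij' (fun β => reflVec (D.sroot i) β) (fun β => reflVec (D.sroot i) β)
  · intro a ha
    rw [Finset.mem_erase] at ha ⊢
    have := simple_perm i ha.2 ha.1
    exact ⟨this.2, this.1⟩
  · intro a ha
    rw [Finset.mem_erase] at ha ⊢
    have := simple_perm i ha.2 ha.1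
    exact ⟨this.2, this.1⟩
  · intro a _; exact reflVec_invol (sroot_ne i) a
  · intro a _; exact reflVec_invol (sroot_ne i) a
  · intro a _; rw [reflVec_invol (sroot_ne i) a]

end DH
namespace DH

variable {n : ℕ} {D : RootSystemData n}

lemma coroot_theta (hnorm : ⟪D.hst, D.hst⟫ = (2 : ℝ)) : coroot D.hst = D.hst := by
  rw [coroot, hnorm]
  norm_num

lemma reflVec_theta (hnorm : ⟪D.hst, D.hst⟫ = (2 : ℝ)) (v : Vn n) :
    reflVec D.hst v = v - ⟪v, D.hst⟫ • D.hst := by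
  rw [reflVec_def, hnorm]
  congr 2
  ring

lemma theta_dominant_sroot (hnorm : ⟪D.hst, D.hst⟫ = (2 : ℝ)) (i : Fin n) :
    0 ≤ ⟪D.hst, D.sroot i⟫ := by
  have hR : reflVec (D.sroot i) D.hst ∈ D.R := D.reflect_mem _ (sroot_R i) _ theta_R
  obtain ⟨c, hc0, hc⟩ := D.theta_highest _ hR
  have hlen : ⟪reflVec (D.sroot i) D.hst, reflVec (D.sroot i) D.hst⟫ = (2 : ℝ) := by
    rw [reflVec_isometry (sroot_ne i), hnorm]
  have hcor : coroot (reflVec (D.sroot i) D.hst) = reflVec (D.sroot i) D.hst := by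
    rw [coroot, hlen]
    norm_num
  rw [coroot_theta hnorm, hcor, reflVec_def, sub_sub_cancel] at hc
  have hfwi := congrArg (fun v => ⟪D.fw i, v⟫) hc
  simp only [real_inner_smul_right, inner_sum] at hfwi
  rw [inner_fw_sroot i i, if_pos rfl] at hfwi
  have hrhs : ∑ l, c l * ⟪D.fw i, coroot (D.sroot l)⟫ = c i := by
    rw [Finset.sum_eq_single i]
    · rw [D.fw_pair i i, if_pos rfl, mul_one]
    · intro l _ hl
      rw [D.fw_pair i l, if_neg (Ne.symm hl), mul_zero]
    · intro h; exact absurd (Finset.mem_univ i) h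
  rw [hrhs] at hfwi
  have hA := inner_self_ne (sroot_ne (D := D) i)
  have hval : ∀ A m : ℝ, A ≠ 0 → 2 * m / A * (A / 2) = m := by
    intro A m hA0; field_simp
  rw [hval _ _ hA] at hfwi
  rw [hfwi]
  exact hc0 i

lemma theta_dominant (hnorm : ⟪D.hst, D.hst⟫ = (2 : ℝ)) {β : Vn n} (hβ : β ∈ D.Rplus) :
    0 ≤ ⟪D.hst, β⟫ := by
  obtain ⟨c, hc⟩ := D.pos_decomp β hβ
  rw [hc, inner_sum]
  apply Finset.sum_nonneg
  intro l _
  rw [real_inner_smul_right]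
  have h1 := theta_dominant_sroot hnorm l
  positivity

lemma theta_link (hnorm : ⟪D.hst, D.hst⟫ = (2 : ℝ)) {γ : Vn n} (hγ : γ ∈ D.Rplus)
    (hne : γ ≠ D.hst) (hm : ⟪D.hst, γ⟫ ≠ 0) : 2 * ⟪D.hst, γ⟫ = ⟪γ, γ⟫ := by
  have hγR : γ ∈ D.R := D.pos_sub hγ
  have hγ0 : γ ≠ 0 := D.root_ne_zero _ hγR
  have hA : 0 < ⟪γ, γ⟫ := inner_self_pos hγ0
  have hA2 : (2:ℝ) ≤ ⟪γ, γ⟫ := hnorm ▸ D.theta_short γ hγR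
  have hmpos : 0 < ⟪D.hst, γ⟫ := lt_of_le_of_ne (theta_dominant hnorm hγ) (Ne.symm hm)
  obtain ⟨z, hz⟩ := D.crystallographic γ hγR D.hst theta_R
  -- hz : 2 * ⟪hst, γ⟫ / ⟪γ,γ⟫ = z
  set m := ⟪D.hst, γ⟫ with hmdef
  have hp : (z : ℝ) = 2 * m / ⟪γ, γ⟫ := hz.symm
  have hzpos : 0 < (z : ℝ) := by rw [hp]; positivity
  have hz1 : 1 ≤ (z : ℝ) := by exact_mod_cast (by exact_mod_cast hzpos : (0:ℤ) < z)
  by_cases hz2 : (z : ℝ) = 1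
  · rw [hz2] at hp
    rw [eq_comm, div_eq_one_iff_eq (ne_of_gt hA)] at hp
    linarith
  -- otherwise z ≥ 2
  exfalso
  have hz2' : (2 : ℝ) ≤ (z : ℝ) := by
    have : (1:ℤ) < z := by
      rcases lt_or_eq_of_le (by exact_mod_cast hz1 : (1:ℤ) ≤ z) with h | h
      · exact h
      · exact absurd (by exact_mod_cast h.symm : (z:ℝ) = 1) hz2
    exact_mod_cast this
  -- Cauchy-Schwarz : m^2 ≤ 2 * ⟪γ,γ⟫
  have hcs : m * m ≤ 2 * ⟪γ, γ⟫ := by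
    have := real_inner_mul_inner_self_le D.hst γ
    rwa [hnorm] at this
  -- z = 2m/A, so z*m = 2m^2/A ≤ 4; m = z*A/2 ≥ 2*2/2 = 2; z ≥ 2 ⇒ z*m ≥ 4 ⇒ all equal
  have hmA : m = (z:ℝ) * ⟪γ,γ⟫ / 2 := by
    have h2 : (z:ℝ) * ⟪γ,γ⟫ = 2 * m := by
      rw [hp, div_mul_cancel₀ _ (ne_of_gt hA)]
    linarith
  have hm2 : (2:ℝ) ≤ m := by
    rw [hmA]
    nlinarith
  have hzm : (z:ℝ) * m ≤ 4 := by
    rw [hp]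
    rw [div_mul_eq_mul_div, div_le_iff₀ hA]
    nlinarith
  have hz2eq : (z:ℝ) = 2 := by nlinarith
  have hmeq : m = 2 := by nlinarith
  have hAeq : ⟪γ,γ⟫ = 2 := by rw [hz2eq] at hmA; linarith [hmA, hmeq]
  -- then θ = γ
  have h5 : ⟪γ, D.hst⟫ = 2 := by
    rw [← real_inner_comm γ D.hst]
    exact hmeq
  have : ⟪D.hst - γ, D.hst - γ⟫ = 0 := by
    rw [inner_sub_left, inner_sub_right, inner_sub_right, hnorm, hAeq, h5]
    have h6 : ⟪D.hst, γ⟫ = 2 := hmeq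
    rw [h6]
    ring
  have h0 : D.hst - γ = 0 := inner_self_eq_zero.mp this
  apply hne
  rw [sub_eq_zero] at h0
  exact h0.symm

lemma psi_facts (hnorm : ⟪D.hst, D.hst⟫ = (2 : ℝ)) {γ : Vn n} (hγ : γ ∈ D.Rplus)
    (hm : ⟪D.hst, γ⟫ ≠ 0) :
    (⟪D.hst, γ⟫ • D.hst - γ) ∈ D.Rplus ∧ ⟪D.hst, ⟪D.hst, γ⟫ • D.hst - γ⟫ = ⟪D.hst, γ⟫ := by
  have hγR : γ ∈ D.R := D.pos_sub hγ
  have hinner : ⟪D.hst, ⟪D.hst, γ⟫ • D.hst - γ⟫ = ⟪D.hst, γ⟫ := by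
    rw [inner_sub_right, real_inner_smul_right, hnorm]
    ring
  refine ⟨?_, hinner⟩
  have hrefl : reflVec D.hst γ = γ - ⟪D.hst, γ⟫ • D.hst := by
    rw [reflVec_theta hnorm, real_inner_comm]
  have hψ : ⟪D.hst, γ⟫ • D.hst - γ = -(reflVec D.hst γ) := by
    rw [hrefl]; abel
  by_cases hθγ : γ = D.hst
  · subst hθγ
    have heq : ⟪D.hst, D.hst⟫ • D.hst - D.hst = D.hst := by
      rw [hnorm, two_smul ℝ D.hst]; abel
    rw [heq]; exact hγ
  · have hmpos : 0 < ⟪D.hst, γ⟫ := lt_of_le_of_ne (theta_dominant hnorm hγ) (Ne.symm hm)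
    have hreflR : reflVec D.hst γ ∈ D.R := D.reflect_mem _ theta_R _ hγR
    have hneg : ⟪D.hst, reflVec D.hst γ⟫ < 0 := by
      rw [hrefl, inner_sub_right, real_inner_smul_right, hnorm]
      linarith
    rcases D.pos_or _ hreflR with h | h
    · exact absurd (theta_dominant hnorm h) (not_le.mpr hneg)
    · rwa [hψ]

lemma psi_inner (hnorm : ⟪D.hst, D.hst⟫ = (2 : ℝ)) {γ : Vn n} (hγ : γ ∈ D.Rplus)
    (hm : ⟪D.hst, γ⟫ ≠ 0) : ⟪D.hst, ⟪D.hst, γ⟫ • D.hst - γ⟫ = ⟪D.hst, γ⟫ :=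
  (psi_facts hnorm hγ hm).2

lemma psi_mem (hnorm : ⟪D.hst, D.hst⟫ = (2 : ℝ)) {γ : Vn n} (hγ : γ ∈ D.Rplus)
    (hm : ⟪D.hst, γ⟫ ≠ 0) : (⟪D.hst, γ⟫ • D.hst - γ) ∈ D.Rplus :=
  (psi_facts hnorm hγ hm).1

lemma psi_psi (hnorm : ⟪D.hst, D.hst⟫ = (2 : ℝ)) {γ : Vn n} (hγ : γ ∈ D.Rplus)
    (hm : ⟪D.hst, γ⟫ ≠ 0) :
    ⟪D.hst, ⟪D.hst, γ⟫ • D.hst - γ⟫ • D.hst - (⟪D.hst, γ⟫ • D.hst - γ) = γ := by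
  rw [psi_inner hnorm hγ hm]
  abel

lemma psi_ne_theta (hnorm : ⟪D.hst, D.hst⟫ = (2 : ℝ)) {γ : Vn n} (hγ : γ ∈ D.Rplus)
    (hne : γ ≠ D.hst) : ⟪D.hst, γ⟫ • D.hst - γ ≠ D.hst := by
  intro hcon
  have hγeq : γ = (⟪D.hst, γ⟫ - 1) • D.hst := by
    rw [sub_smul, one_smul, sub_eq_iff_eq_add.mp hcon]
    abel
  have hγR : γ ∈ D.R := D.pos_sub hγ
  rw [hγeq] at hγR
  rcases D.reduced D.hst theta_R _ hγR with h | h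
  · rw [h, one_smul] at hγeq
    exact hne hγeq
  · rw [h] at hγeq
    have h2 := D.pos_not_and D.hst D.theta_mem
    rw [neg_one_smul] at hγeq
    rw [hγeq] at hγ
    exact h2 hγ

lemma sum_reindex_theta {M : Type*} [AddCommMonoid M]
    (hnorm : ⟪D.hst, D.hst⟫ = (2 : ℝ)) (F : Vn n → M) :
    ∑ γ ∈ D.Rplus.filter (fun γ => ⟪D.hst, γ⟫ ≠ 0), F γ
      = ∑ γ ∈ D.Rplus.filter (fun γ => ⟪D.hst, γ⟫ ≠ 0), F (⟪D.hst, γ⟫ • D.hst - γ) := by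
  apply Finset.sum_nbij' (fun γ => ⟪D.hst, γ⟫ • D.hst - γ) (fun γ => ⟪D.hst, γ⟫ • D.hst - γ)
  · intro a ha
    rw [Finset.mem_filter] at ha ⊢
    exact ⟨psi_mem hnorm ha.1 ha.2, by rw [psi_inner hnorm ha.1 ha.2]; exact ha.2⟩
  · intro a ha
    rw [Finset.mem_filter] at ha ⊢
    exact ⟨psi_mem hnorm ha.1 ha.2, by rw [psi_inner hnorm ha.1 ha.2]; exact ha.2⟩
  · intro a ha
    rw [Finset.mem_filter] at ha
    exact psi_psi hnorm ha.1 ha.2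
  · intro a ha
    rw [Finset.mem_filter] at ha
    exact psi_psi hnorm ha.1 ha.2
  · intro a ha
    rw [Finset.mem_filter] at ha
    rw [psi_psi hnorm ha.1 ha.2]

end DH

open DH

/-- the defining cross-relations of the degenerate (graded) double affine
Hecke algebra hold in the polynomial representation `ℂ[P]`:
(i) `s_i ∘ 𝒟_b − 𝒟_{s_i(b)} ∘ s_i = −k_{α_i}·(b, α_i)·id` for `1 ≤ i ≤ n`;
(ii) with `s_0^x(f) = X_θ·s_θ(f)` (where `θ` is the highest short root, `(θ,θ) = 2`),
`s_0^x ∘ 𝒟_b − (𝒟_{s_θ(b)} + (b,θ)·id) ∘ s_0^x = k_θ·(b,θ)·id`. -/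
theorem stmt_19 {n : ℕ} (D : RootSystemData n)
    (hRP : ∀ α ∈ D.R, α ∈ D.P)
    (hnorm : ⟪D.hst, D.hst⟫ = (2 : ℝ))
    (k : Vn n → ℂ)
    (hk : ∀ α ∈ D.R, ∀ β ∈ D.R, k (reflVec α β) = k β)
    (sP : Vn n → ↥D.P → ↥D.P)
    (hsP : ∀ α ∈ D.R, ∀ b : ↥D.P, ((sP α b : Vn n)) = reflVec α ↑b)
    (b : Vn n) (hb : b ∈ D.P)
    (Db : GA D → GA D) (hDb : IsTrigDunkl D k sP b Db) :
    (∀ i : Fin n, ∀ Dsb : GA D → GA D,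
        IsTrigDunkl D k sP (reflVec (D.sroot i) b) Dsb →
        ∀ f : GA D,
          sOp D (sP (D.sroot i)) (Db f) - Dsb (sOp D (sP (D.sroot i)) f) =
            (-(k (D.sroot i) * ((⟪b, D.sroot i⟫ : ℝ) : ℂ))) • f) ∧
      ∀ Dtb : GA D → GA D,
        IsTrigDunkl D k sP (reflVec D.hst b) Dtb →
        ∀ f : GA D,
          XP D D.hst * sOp D (sP D.hst) (Db f) -
              (Dtb (XP D D.hst * sOp D (sP D.hst) f) +
                ((⟪b, D.hst⟫ : ℝ) : ℂ) • (XP D D.hst * sOp D (sP D.hst) f)) =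
            (k D.hst * ((⟪b, D.hst⟫ : ℝ) : ℂ)) • f := by
  constructor
  · intro i Dsb hDsb f
    set A := D.sroot i with hA
    have hAR : A ∈ D.R := D.pos_sub (D.sroot_mem i)
    have hA0 : A ≠ 0 := D.root_ne_zero _ hAR
    have hAP : A ∈ D.P := hRP _ hAR
    have hs : ∀ p : ↥D.P, ((sP A p : Vn n)) = reflVec A ↑p := hsP A hAR
    obtain ⟨g, hg1, hg2⟩ := hDb f
    set sif := sOp D (sP A) f with hsif
    obtain ⟨g', hg'1, hg'2⟩ := hDsb sif
    have E1 : ∀ β ∈ D.Rplus.erase A, sOp D (sP A) (g β) = g' (reflVec A β) := by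
      intro β hβm
      rw [Finset.mem_erase] at hβm
      obtain ⟨hβne, hβp⟩ := hβm
      have hβR : β ∈ D.R := D.pos_sub hβp
      have hβ0 : β ≠ 0 := D.root_ne_zero _ hβR
      have hβP : β ∈ D.P := hRP _ hβR
      obtain ⟨hγp, hγne⟩ := simple_perm i hβp hβne
      have hγR : reflVec A β ∈ D.R := D.pos_sub hγp
      have hγP : reflVec A β ∈ D.P := hRP _ hγR
      have hγ0 : reflVec A β ≠ 0 := D.root_ne_zero _ hγR
      apply cancel D (Submodule.neg_mem _ hγP) (neg_ne_zero.mpr hγ0)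
      rw [hg'1 _ hγp]
      have h2 : sOp D (sP A) ((1 - XP D (-β)) * g β)
          = (1 - XP D (-(reflVec A β))) * sOp D (sP A) (g β) := by
        rw [sOp_mul hs, sOp_sub, sOp_one hs, sOp_XP hs (Submodule.neg_mem _ hβP),
          reflVec_neg]
      rw [← h2, hg1 _ hβp, sOp_sub]
      congr 1
      rw [sOp_sOp, sOp_sOp]
      congr 1
      funext p
      show sP A (sP β p) = sP (reflVec A β) (sP A p)
      apply Subtype.ext
      rw [hs, hsP β hβR, hsP _ hγR, hs]
      have hconj := reflVec_conj hA0 β (reflVec A (p : Vn n))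
      rw [reflVec_invol hA0] at hconj
      exact hconj.symm
    have E2 : sOp D (sP A) (g A) = sif - f - g' A := by
      apply cancel D hAP hA0
      have key : (1 : GA D) - XP D A = -XP D A * (1 - XP D (-A)) := by
        rw [neg_mul, mul_sub, mul_one, XP_mul D hAP (Submodule.neg_mem _ hAP),
          show A + -A = (0 : Vn n) by abel, XP_zero]
        ring
      have hLHS : (1 - XP D A) * sOp D (sP A) (g A) = sif - f := by
        have h2 : sOp D (sP A) ((1 - XP D (-A)) * g A)
            = (1 - XP D A) * sOp D (sP A) (g A) := by
          rw [sOp_mul hs, sOp_sub, sOp_one hs, sOp_XP hs (Submodule.neg_mem _ hAP),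
            reflVec_neg, reflVec_self hA0, neg_neg]
        rw [← h2, hg1 _ (D.sroot_mem i), sOp_sub, sOp_invol hA0 hs]
      rw [hLHS]
      have h3 : (1 - XP D A) * g' A = -XP D A * (sif - f) := by
        rw [key, mul_assoc, hg'1 _ (D.sroot_mem i), sOp_invol hA0 hs]
      linear_combination h3
    have S1 : ∑ β ∈ D.Rplus, (k β * ((⟪b, β⟫ : ℝ) : ℂ)) • sOp D (sP A) (g β)
        = (∑ β ∈ D.Rplus, (k β * ((⟪reflVec A b, β⟫ : ℝ) : ℂ)) • g' β)
          + (k A * ((⟪b, A⟫ : ℝ) : ℂ)) • (sif - f) := by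
      rw [← Finset.add_sum_erase _ _ (D.sroot_mem i),
        ← Finset.add_sum_erase _
          (fun β => (k β * ((⟪reflVec A b, β⟫ : ℝ) : ℂ)) • g' β) (D.sroot_mem i)]
      have hxx : ∑ β ∈ D.Rplus.erase A, (k β * ((⟪b, β⟫ : ℝ) : ℂ)) • sOp D (sP A) (g β)
          = ∑ β ∈ D.Rplus.erase A, (k β * ((⟪reflVec A b, β⟫ : ℝ) : ℂ)) • g' β := by
        rw [sum_reindex_simple i
          (fun β => (k β * ((⟪reflVec A b, β⟫ : ℝ) : ℂ)) • g' β)]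
        apply Finset.sum_congr rfl
        intro β hβm
        rw [E1 β hβm]
        rw [Finset.mem_erase] at hβm
        have hβR : β ∈ D.R := D.pos_sub hβm.2
        rw [hk A hAR β hβR, reflVec_adjoint A b (reflVec A β), reflVec_invol hA0]
      rw [hxx, E2]
      have hbA : ⟪reflVec A b, A⟫ = -⟪b, A⟫ := by
        rw [reflVec_adjoint A b A, reflVec_self hA0, inner_neg_right]
      rw [hbA]
      push_cast
      module
    have S2 : ∑ γ ∈ D.Rplus, k γ * ((⟪γ, reflVec A b⟫ : ℝ) : ℂ)
        = ∑ γ ∈ D.Rplus, k γ * ((⟪γ, b⟫ : ℝ) : ℂ)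
          - 2 * (k A * ((⟪A, b⟫ : ℝ) : ℂ)) := by
      have hstep1 : ∑ γ ∈ D.Rplus, k γ * ((⟪γ, reflVec A b⟫ : ℝ) : ℂ)
          = ∑ γ ∈ D.Rplus, k γ * ((⟪reflVec A γ, b⟫ : ℝ) : ℂ) := by
        apply Finset.sum_congr rfl
        intro γ _
        rw [reflVec_adjoint A γ b]
      rw [hstep1, ← Finset.add_sum_erase _
        (fun γ => k γ * ((⟪reflVec A γ, b⟫ : ℝ) : ℂ)) (D.sroot_mem i)]
      have hstep2 : ∑ γ ∈ D.Rplus.erase A, k γ * ((⟪reflVec A γ, b⟫ : ℝ) : ℂ)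
          = ∑ γ ∈ D.Rplus.erase A, k γ * ((⟪γ, b⟫ : ℝ) : ℂ) := by
        rw [sum_reindex_simple i (fun γ => k γ * ((⟪γ, b⟫ : ℝ) : ℂ))]
        apply Finset.sum_congr rfl
        intro γ hγm
        rw [Finset.mem_erase] at hγm
        have hγR : γ ∈ D.R := D.pos_sub hγm.2
        rw [hk A hAR γ hγR]
      rw [hstep2, reflVec_self hA0, inner_neg_left,
        ← Finset.add_sum_erase _ (fun γ => k γ * ((⟪γ, b⟫ : ℝ) : ℂ)) (D.sroot_mem i)]
      push_cast
      ring
    rw [hg2, hg'2, sOp_sub, sOp_add, sOp_sum]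
    simp only [sOp_smul]
    rw [sOp_der hA0 hs, S1, S2, ← hsif]
    rw [show ⟪A, b⟫ = ⟪b, A⟫ from real_inner_comm b A]
    module
  · intro Dtb hDtb f
    have hθR : D.hst ∈ D.R := D.pos_sub D.theta_mem
    have hθ0 : D.hst ≠ 0 := D.root_ne_zero _ hθR
    have hθP : D.hst ∈ D.P := hRP _ hθR
    have hθm2 : ⟪D.hst, D.hst⟫ ≠ 0 := by rw [hnorm]; norm_num
    have hsθ : ∀ p : ↥D.P, ((sP D.hst p : Vn n)) = reflVec D.hst ↑p := hsP D.hst hθR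
    obtain ⟨g, hg1, hg2⟩ := hDb f
    set s0f := XP D D.hst * sOp D (sP D.hst) f with hs0f
    obtain ⟨g', hg'1, hg'2⟩ := hDtb s0f
    have hXX : XP D D.hst * XP D (-D.hst) = 1 := by
      rw [XP_mul D hθP (Submodule.neg_mem _ hθP),
        show D.hst + -D.hst = (0 : Vn n) by abel, XP_zero]
    have key : (1 : GA D) - XP D D.hst = -XP D D.hst * (1 - XP D (-D.hst)) := by
      rw [neg_mul, mul_sub, mul_one, XP_mul D hθP (Submodule.neg_mem _ hθP),
        show D.hst + -D.hst = (0 : Vn n) by abel, XP_zero]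
      ring
    have key2 : (1 : GA D) - XP D (-D.hst) = -XP D (-D.hst) * (1 - XP D D.hst) := by
      rw [neg_mul, mul_sub, mul_one,
        XP_mul D (Submodule.neg_mem _ hθP) hθP,
        show -D.hst + D.hst = (0 : Vn n) by abel, XP_zero]
      ring
    -- the unified per-term claim on the filter
    have FF : ∀ γ ∈ D.Rplus.filter (fun γ => ⟪D.hst, γ⟫ ≠ 0),
        XP D D.hst * sOp D (sP D.hst) (g γ)
          = s0f + (if γ = D.hst then f else 0) - g' (⟪D.hst, γ⟫ • D.hst - γ) := by
      intro γ hγm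
      rw [Finset.mem_filter] at hγm
      obtain ⟨hγp, hm⟩ := hγm
      by_cases hγθ : γ = D.hst
      · subst hγθ
        rw [if_pos rfl]
        have hψθ : ⟪D.hst, D.hst⟫ • D.hst - D.hst = D.hst := by
          rw [hnorm, two_smul ℝ D.hst]
          abel
        rw [hψθ]
        apply cancel D hθP hθ0
        have h2 : sOp D (sP D.hst) ((1 - XP D (-D.hst)) * g D.hst)
            = (1 - XP D D.hst) * sOp D (sP D.hst) (g D.hst) := by
          rw [sOp_mul hsθ, sOp_sub, sOp_one hsθ, sOp_XP hsθ (Submodule.neg_mem _ hθP),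
            reflVec_neg, reflVec_self hθ0, neg_neg]
        have hLHS : (1 - XP D D.hst) * (XP D D.hst * sOp D (sP D.hst) (g D.hst))
            = s0f - XP D D.hst * f := by
          calc (1 - XP D D.hst) * (XP D D.hst * sOp D (sP D.hst) (g D.hst))
              = XP D D.hst * ((1 - XP D D.hst) * sOp D (sP D.hst) (g D.hst)) := by ring
            _ = XP D D.hst * sOp D (sP D.hst) ((1 - XP D (-D.hst)) * g D.hst) := by rw [h2]
            _ = XP D D.hst * (sOp D (sP D.hst) f - f) := by
                rw [hg1 _ D.theta_mem, sOp_sub, sOp_invol hθ0 hsθ]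
            _ = s0f - XP D D.hst * f := by rw [mul_sub, ← hs0f]
        have hsθs0f : sOp D (sP D.hst) s0f = XP D (-D.hst) * f := by
          rw [hs0f, sOp_mul hsθ, sOp_XP hsθ hθP, reflVec_self hθ0, sOp_invol hθ0 hsθ]
        have h3 : (1 - XP D D.hst) * g' D.hst = -XP D D.hst * s0f + f := by
          rw [key, mul_assoc, hg'1 _ D.theta_mem, hsθs0f]
          linear_combination f * hXX
        rw [hLHS]
        linear_combination h3
      · rw [if_neg hγθ, add_zero]
        have hγR : γ ∈ D.R := D.pos_sub hγp
        have hγ0 : γ ≠ 0 := D.root_ne_zero _ hγR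
        have hγP : γ ∈ D.P := hRP _ hγR
        have hmpos : 0 < ⟪D.hst, γ⟫ :=
          lt_of_le_of_ne (theta_dominant hnorm hγp) (Ne.symm hm)
        set δ := ⟪D.hst, γ⟫ • D.hst - γ with hδdef
        have hδp : δ ∈ D.Rplus := psi_mem hnorm hγp hm
        have hδinner : ⟪D.hst, δ⟫ = ⟪D.hst, γ⟫ := psi_inner hnorm hγp hm
        have hδθ : δ ≠ D.hst := psi_ne_theta hnorm hγp hγθ
        have hδR : δ ∈ D.R := D.pos_sub hδp
        have hδ0 : δ ≠ 0 := D.root_ne_zero _ hδR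
        have hδP : δ ∈ D.P := hRP _ hδR
        have hδm : ⟪D.hst, δ⟫ ≠ 0 := by rw [hδinner]; exact hm
        have hlink : 2 * ⟪D.hst, δ⟫ = ⟪δ, δ⟫ := theta_link hnorm hδp hδθ hδm
        have hsδθ : reflVec δ D.hst = D.hst - δ := by
          rw [reflVec_def, hlink, div_self (inner_self_ne hδ0), one_smul]
        have hrθγ : reflVec D.hst γ = -δ := by
          rw [reflVec_theta hnorm, hδdef, real_inner_comm γ D.hst]
          abel
        have hrθnγ : reflVec D.hst (-γ) = δ := by
          rw [reflVec_neg, hrθγ, neg_neg]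
        have hcomp : ∀ v : Vn n, reflVec δ (reflVec D.hst v) = reflVec D.hst (reflVec γ v) := by
          intro v
          have hconj := reflVec_conj hθ0 γ (reflVec D.hst v)
          rw [reflVec_invol hθ0] at hconj
          rw [hrθγ, reflVec_neg_root] at hconj
          exact hconj
        have hmapeq : (sP δ) ∘ (sP D.hst) = (sP D.hst) ∘ (sP γ) := by
          funext p
          show sP δ (sP D.hst p) = sP D.hst (sP γ p)
          apply Subtype.ext
          rw [hsP δ hδR, hsθ, hsθ, hsP γ hγR]
          exact hcomp (p : Vn n)
        have keyδ : (1 : GA D) - XP D (-δ) = -XP D (-δ) * (1 - XP D δ) := by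
          rw [neg_mul, mul_sub, mul_one, XP_mul D (Submodule.neg_mem _ hδP) hδP,
            show -δ + δ = (0 : Vn n) by abel, XP_zero]
          ring
        apply cancel D (Submodule.neg_mem _ hδP) (neg_ne_zero.mpr hδ0)
        have h2 : sOp D (sP D.hst) ((1 - XP D (-γ)) * g γ)
            = (1 - XP D δ) * sOp D (sP D.hst) (g γ) := by
          rw [sOp_mul hsθ, sOp_sub, sOp_one hsθ, sOp_XP hsθ (Submodule.neg_mem _ hγP), hrθnγ]
        have hLHS : (1 - XP D δ) * (XP D D.hst * sOp D (sP D.hst) (g γ))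
            = XP D D.hst * sOp D (sP D.hst) f
              - XP D D.hst * sOp D (sP D.hst) (sOp D (sP γ) f) := by
          calc (1 - XP D δ) * (XP D D.hst * sOp D (sP D.hst) (g γ))
              = XP D D.hst * ((1 - XP D δ) * sOp D (sP D.hst) (g γ)) := by ring
            _ = XP D D.hst * sOp D (sP D.hst) ((1 - XP D (-γ)) * g γ) := by rw [h2]
            _ = _ := by rw [hg1 _ hγp, sOp_sub, mul_sub]
        have hsδs0f : sOp D (sP δ) s0f
            = XP D D.hst * XP D (-δ) * sOp D (sP D.hst) (sOp D (sP γ) f) := by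
          rw [hs0f, sOp_mul (hsP δ hδR), sOp_XP (hsP δ hδR) hθP, hsδθ,
            show D.hst - δ = D.hst + -δ by abel,
            ← XP_mul D hθP (Submodule.neg_mem _ hδP), sOp_sOp, sOp_sOp, hmapeq]
        have hg'δ := hg'1 δ hδp
        linear_combination (XP D D.hst * sOp D (sP D.hst) (g γ)) * keyδ
          - XP D (-δ) * hLHS + hg'δ + XP D (-δ) * hs0f - hsδs0f
    -- F1 : the perpendicular positive roots
    have F1 : ∀ γ ∈ D.Rplus.filter (fun γ => ¬⟪D.hst, γ⟫ ≠ 0),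
        XP D D.hst * sOp D (sP D.hst) (g γ) = g' γ := by
      intro γ hγm
      rw [Finset.mem_filter, not_not] at hγm
      obtain ⟨hγp, hm0⟩ := hγm
      have hγR : γ ∈ D.R := D.pos_sub hγp
      have hγ0 : γ ≠ 0 := D.root_ne_zero _ hγR
      have hγP : γ ∈ D.P := hRP _ hγR
      have hperp : reflVec D.hst γ = γ := by
        rw [reflVec_theta hnorm, ← real_inner_comm γ D.hst, hm0, zero_smul, sub_zero]
      have hperpγθ : reflVec γ D.hst = D.hst := by
        rw [reflVec_def, hm0, mul_zero, zero_div, zero_smul, sub_zero]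
      apply cancel D (Submodule.neg_mem _ hγP) (neg_ne_zero.mpr hγ0)
      have h2 : sOp D (sP D.hst) ((1 - XP D (-γ)) * g γ)
          = (1 - XP D (-γ)) * sOp D (sP D.hst) (g γ) := by
        rw [sOp_mul hsθ, sOp_sub, sOp_one hsθ, sOp_XP hsθ (Submodule.neg_mem _ hγP),
          reflVec_neg, hperp]
      have hcommute : sOp D (sP γ) s0f
          = XP D D.hst * sOp D (sP D.hst) (sOp D (sP γ) f) := by
        have hcc : (sP γ) ∘ (sP D.hst) = (sP D.hst) ∘ (sP γ) := by
          funext p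
          show sP γ (sP D.hst p) = sP D.hst (sP γ p)
          apply Subtype.ext
          rw [hsP γ hγR, hsθ, hsθ, hsP γ hγR]
          exact (reflVec_comm hθ0 hperp (p : Vn n)).symm
        rw [hs0f, sOp_mul (hsP γ hγR), sOp_XP (hsP γ hγR) hθP, hperpγθ, sOp_sOp, sOp_sOp, hcc]
      rw [hg'1 _ hγp, hcommute]
      calc (1 - XP D (-γ)) * (XP D D.hst * sOp D (sP D.hst) (g γ))
          = XP D D.hst * ((1 - XP D (-γ)) * sOp D (sP D.hst) (g γ)) := by ring
        _ = XP D D.hst * sOp D (sP D.hst) ((1 - XP D (-γ)) * g γ) := by rw [h2]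
        _ = s0f - XP D D.hst * sOp D (sP D.hst) (sOp D (sP γ) f) := by
            rw [hg1 _ hγp, sOp_sub, mul_sub, ← hs0f]
    -- derivative part
    have hder : XP D D.hst * sOp D (sP D.hst) (der D b f)
        = der D (reflVec D.hst b) s0f + ((⟪b, D.hst⟫ : ℝ) : ℂ) • s0f := by
      rw [sOp_der hθ0 hsθ b f]
      have h4 := der_XP_mul (D := D) (reflVec D.hst b) hθP (sOp D (sP D.hst) f)
      rw [← hs0f] at h4
      have h5 : ⟪reflVec D.hst b, D.hst⟫ = -⟪b, D.hst⟫ := by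
        rw [reflVec_adjoint, reflVec_self hθ0, inner_neg_right]
      rw [h5] at h4
      push_cast at h4
      rw [h4]
      module
    -- psi-related scalar facts
    have hψvec : ∀ γ, ⟪D.hst, γ⟫ • D.hst - γ = -reflVec D.hst γ := by
      intro γ
      rw [reflVec_theta hnorm, real_inner_comm γ D.hst]
      abel
    have hkψ : ∀ γ ∈ D.Rplus, k (⟪D.hst, γ⟫ • D.hst - γ) = k γ := by
      intro γ hγp
      have hγR : γ ∈ D.R := D.pos_sub hγp
      have hrR : reflVec D.hst γ ∈ D.R := D.reflect_mem _ hθR _ hγR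
      have hr0 : reflVec D.hst γ ≠ 0 := D.root_ne_zero _ hrR
      rw [hψvec γ, show -reflVec D.hst γ = reflVec (reflVec D.hst γ) (reflVec D.hst γ) from
        (reflVec_self hr0).symm, hk _ hrR _ hrR, hk _ hθR _ hγR]
    have hbψ : ∀ γ : Vn n, ⟪reflVec D.hst b, ⟪D.hst, γ⟫ • D.hst - γ⟫ = -⟪b, γ⟫ := by
      intro γ
      rw [reflVec_adjoint, hψvec γ, reflVec_neg, reflVec_invol hθ0, inner_neg_right]
    have hbz : ∀ γ, ⟪D.hst, γ⟫ = 0 → ⟪reflVec D.hst b, γ⟫ = ⟪b, γ⟫ := by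
      intro γ h0
      rw [reflVec_adjoint, reflVec_theta hnorm, ← real_inner_comm γ D.hst, h0, zero_smul,
        sub_zero]
    -- main sum identity
    have HA : ∑ β ∈ D.Rplus,
          (k β * ((⟪b, β⟫ : ℝ) : ℂ)) • (XP D D.hst * sOp D (sP D.hst) (g β))
        = ∑ β ∈ D.Rplus, (k β * ((⟪reflVec D.hst b, β⟫ : ℝ) : ℂ)) • g' β
          + (∑ γ ∈ D.Rplus.filter (fun γ => ⟪D.hst, γ⟫ ≠ 0),
              k γ * ((⟪b, γ⟫ : ℝ) : ℂ)) • s0f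
          + (k D.hst * ((⟪b, D.hst⟫ : ℝ) : ℂ)) • f := by
      rw [← Finset.sum_filter_add_sum_filter_not D.Rplus (fun γ => ⟪D.hst, γ⟫ ≠ 0)
            (fun β => (k β * ((⟪b, β⟫ : ℝ) : ℂ)) • (XP D D.hst * sOp D (sP D.hst) (g β))),
          ← Finset.sum_filter_add_sum_filter_not D.Rplus (fun γ => ⟪D.hst, γ⟫ ≠ 0)
            (fun β => (k β * ((⟪reflVec D.hst b, β⟫ : ℝ) : ℂ)) • g' β)]
      have hz : ∑ β ∈ D.Rplus.filter (fun γ => ¬⟪D.hst, γ⟫ ≠ 0),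
            (k β * ((⟪b, β⟫ : ℝ) : ℂ)) • (XP D D.hst * sOp D (sP D.hst) (g β))
          = ∑ β ∈ D.Rplus.filter (fun γ => ¬⟪D.hst, γ⟫ ≠ 0),
            (k β * ((⟪reflVec D.hst b, β⟫ : ℝ) : ℂ)) • g' β := by
        apply Finset.sum_congr rfl
        intro β hβm
        have hm0 : ⟪D.hst, β⟫ = 0 := not_not.mp (Finset.mem_filter.mp hβm).2
        rw [F1 β hβm, hbz β hm0]
      have hp : ∑ β ∈ D.Rplus.filter (fun γ => ⟪D.hst, γ⟫ ≠ 0),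
            (k β * ((⟪b, β⟫ : ℝ) : ℂ)) • (XP D D.hst * sOp D (sP D.hst) (g β))
          = ∑ β ∈ D.Rplus.filter (fun γ => ⟪D.hst, γ⟫ ≠ 0),
              (k β * ((⟪reflVec D.hst b, β⟫ : ℝ) : ℂ)) • g' β
            + (∑ γ ∈ D.Rplus.filter (fun γ => ⟪D.hst, γ⟫ ≠ 0),
                k γ * ((⟪b, γ⟫ : ℝ) : ℂ)) • s0f
            + (k D.hst * ((⟪b, D.hst⟫ : ℝ) : ℂ)) • f := by
        have h1 : ∑ β ∈ D.Rplus.filter (fun γ => ⟪D.hst, γ⟫ ≠ 0),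
              (k β * ((⟪b, β⟫ : ℝ) : ℂ)) • (XP D D.hst * sOp D (sP D.hst) (g β))
            = ∑ β ∈ D.Rplus.filter (fun γ => ⟪D.hst, γ⟫ ≠ 0),
              ((k β * ((⟪b, β⟫ : ℝ) : ℂ)) • s0f
                + (if β = D.hst then (k β * ((⟪b, β⟫ : ℝ) : ℂ)) • f else 0)
                - (k β * ((⟪b, β⟫ : ℝ) : ℂ)) • g' (⟪D.hst, β⟫ • D.hst - β)) := by
          apply Finset.sum_congr rfl
          intro β hβm
          rw [FF β hβm, smul_sub, smul_add, smul_ite, smul_zero]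
        rw [h1, Finset.sum_sub_distrib, Finset.sum_add_distrib, ← Finset.sum_smul,
          Finset.sum_ite_eq' _ D.hst (fun β => (k β * ((⟪b, β⟫ : ℝ) : ℂ)) • f),
          if_pos (Finset.mem_filter.mpr ⟨D.theta_mem, hθm2⟩)]
        have h2 : ∑ β ∈ D.Rplus.filter (fun γ => ⟪D.hst, γ⟫ ≠ 0),
              (k β * ((⟪reflVec D.hst b, β⟫ : ℝ) : ℂ)) • g' β
            = ∑ β ∈ D.Rplus.filter (fun γ => ⟪D.hst, γ⟫ ≠ 0),
              (-(k β * ((⟪b, β⟫ : ℝ) : ℂ))) • g' (⟪D.hst, β⟫ • D.hst - β) := by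
          rw [sum_reindex_theta hnorm
            (fun β => (k β * ((⟪reflVec D.hst b, β⟫ : ℝ) : ℂ)) • g' β)]
          apply Finset.sum_congr rfl
          intro β hβm
          rw [Finset.mem_filter] at hβm
          rw [hkψ β hβm.1, hbψ β]
          congr 1
          push_cast
          ring
        rw [h2]
        simp only [neg_smul, Finset.sum_neg_distrib]
        abel
      rw [hz, hp]
      abel
    -- scalar sum identities
    have hsplitK : ∑ γ ∈ D.Rplus, k γ * ((⟪γ, D.hst⟫ : ℝ) : ℂ)
        = ∑ γ ∈ D.Rplus.filter (fun γ => ⟪D.hst, γ⟫ ≠ 0), k γ * ((⟪γ, D.hst⟫ : ℝ) : ℂ) := by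
      rw [← Finset.sum_filter_add_sum_filter_not D.Rplus (fun γ => ⟪D.hst, γ⟫ ≠ 0)
            (fun γ => k γ * ((⟪γ, D.hst⟫ : ℝ) : ℂ))]
      have hzero : ∑ γ ∈ D.Rplus.filter (fun γ => ¬⟪D.hst, γ⟫ ≠ 0),
          k γ * ((⟪γ, D.hst⟫ : ℝ) : ℂ) = 0 := by
        apply Finset.sum_eq_zero
        intro γ hγm
        have h0 : ⟪D.hst, γ⟫ = 0 := not_not.mp (Finset.mem_filter.mp hγm).2
        rw [real_inner_comm D.hst γ, h0]
        push_cast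
        ring
      rw [hzero, add_zero]
    have hT : (2 : ℂ) * (∑ γ ∈ D.Rplus.filter (fun γ => ⟪D.hst, γ⟫ ≠ 0),
          k γ * ((⟪b, γ⟫ : ℝ) : ℂ))
        = ((⟪b, D.hst⟫ : ℝ) : ℂ) * ∑ γ ∈ D.Rplus, k γ * ((⟪γ, D.hst⟫ : ℝ) : ℂ) := by
      rw [hsplitK, two_mul]
      nth_rewrite 2 [sum_reindex_theta hnorm (fun γ => k γ * ((⟪b, γ⟫ : ℝ) : ℂ))]
      rw [← Finset.sum_add_distrib, Finset.mul_sum]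
      apply Finset.sum_congr rfl
      intro γ hγm
      rw [Finset.mem_filter] at hγm
      rw [hkψ γ hγm.1]
      have hbψγ : ⟪b, ⟪D.hst, γ⟫ • D.hst - γ⟫ = ⟪D.hst, γ⟫ * ⟪b, D.hst⟫ - ⟪b, γ⟫ := by
        rw [inner_sub_right, real_inner_smul_right]
      rw [hbψγ, real_inner_comm D.hst γ]
      push_cast
      ring
    have hcb' : ∑ γ ∈ D.Rplus, k γ * ((⟪γ, reflVec D.hst b⟫ : ℝ) : ℂ)
        = ∑ γ ∈ D.Rplus, k γ * ((⟪γ, b⟫ : ℝ) : ℂ)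
          - ((⟪b, D.hst⟫ : ℝ) : ℂ) * ∑ γ ∈ D.Rplus, k γ * ((⟪γ, D.hst⟫ : ℝ) : ℂ) := by
      rw [Finset.mul_sum, ← Finset.sum_sub_distrib]
      apply Finset.sum_congr rfl
      intro γ _
      rw [reflVec_theta hnorm b, inner_sub_right, real_inner_smul_right]
      push_cast
      ring
    -- final assembly
    rw [hg2, hg'2, sOp_sub, sOp_add, sOp_sum]
    simp only [sOp_smul]
    rw [mul_sub, mul_add, Finset.mul_sum]
    simp only [mul_smul_comm]
    rw [← hs0f, hder, HA, hcb']
    match_scalars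
    · ring
    · linear_combination hT / 2
    · ring
    · ring
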